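/- The parametrised graph shift operator γ(A,S) has a set of real eigenvectors: under the stated hypotheses, there exist an invertible real matrix P and a real diagonal matrix Λ such that γ(A,S) = P·Λ·P⁻¹; in particular ℝ^n has a basis consisting of real eigenvectors of γ(A,S) with real eigenvalues. -/
import Mathlib


open Matrix BigOperators Finset

/-- Degree of node `i`: the `i`-th row sum of the adjacency matrix `A`. -/
noncomputable def adjDeg {n : ℕ} (A : Matrix (Fin n) (Fin n) ℝ) (i : Fin n) : ℝ :=
  ∑ j, A i j

/-- The diagonal matrix `D_a^e` with diagonal entries `(d_i + a) ^ e` (real powers). -/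
noncomputable def Dpow {n : ℕ} (A : Matrix (Fin n) (Fin n) ℝ) (a e : ℝ) :
    Matrix (Fin n) (Fin n) ℝ :=
  Matrix.diagonal (fun i => (adjDeg A i + a) ^ e)

/-- The parametrised graph shift operator
`γ(A,S) = m1·D_a^{e1} + m2·D_a^{e2}·A_a·D_a^{e3} + m3·I_n`, where `A_a = A + a·I_n`. -/
noncomputable def pgso {n : ℕ} (A : Matrix (Fin n) (Fin n) ℝ)
    (m1 m2 m3 e1 e2 e3 a : ℝ) : Matrix (Fin n) (Fin n) ℝ :=
  m1 • Dpow A a e1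
    + m2 • (Dpow A a e2 * (A + a • (1 : Matrix (Fin n) (Fin n) ℝ)) * Dpow A a e3)
    + m3 • (1 : Matrix (Fin n) (Fin n) ℝ)

/-- The PGSO `γ(A,S)` is diagonalisable over ℝ: there exist an invertible real matrix `P`
and a real diagonal matrix `Λ` with `γ(A,S) = P·Λ·P⁻¹`. -/
lemma symm_diag {n : ℕ} (B : Matrix (Fin n) (Fin n) ℝ) (hB : B.IsHermitian) :
    ∃ P Λ : Matrix (Fin n) (Fin n) ℝ,
      IsUnit P ∧ Λ.IsDiag ∧ B = P * Λ * P⁻¹ := by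
  refine ⟨hB.eigenvectorUnitary, Matrix.diagonal (RCLike.ofReal ∘ hB.eigenvalues),
    ?_, Matrix.isDiag_diagonal _, ?_⟩
  · exact (Unitary.toUnits hB.eigenvectorUnitary).isUnit
  · have hinv : (hB.eigenvectorUnitary : Matrix (Fin n) (Fin n) ℝ)⁻¹
        = star (hB.eigenvectorUnitary : Matrix (Fin n) (Fin n) ℝ) :=
      Matrix.inv_eq_left_inv (Unitary.coe_star_mul_self _)
    rw [hinv]; exact hB.spectral_theorem


theorem pgso_real_diagonalisable
    (n : ℕ) (hn : 0 < n) (A : Matrix (Fin n) (Fin n) ℝ)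
    (hsymm : A.IsSymm) (hnonneg : ∀ i j, 0 ≤ A i j)
    (m1 m2 m3 e1 e2 e3 a : ℝ) (hdeg : ∀ i, 0 < adjDeg A i + a) :
    ∃ P Λ : Matrix (Fin n) (Fin n) ℝ,
      IsUnit P ∧ Λ.IsDiag ∧ pgso A m1 m2 m3 e1 e2 e3 a = P * Λ * P⁻¹ := by
  set t : ℝ := (e2 - e3) / 2 with ht
  set m : ℝ := (e2 + e3) / 2 with hm
  have Dmul : ∀ u v : ℝ, Dpow A a u * Dpow A a v = Dpow A a (u + v) := by
    intro u v
    simp only [Dpow, Matrix.diagonal_mul_diagonal]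
    exact congrArg Matrix.diagonal (funext fun i => (Real.rpow_add (hdeg i) u v).symm)
  have D0 : Dpow A a 0 = 1 := by
    simp [Dpow, Real.rpow_zero]
  have hDt : Dpow A a t * Dpow A a (-t) = 1 := by rw [Dmul]; simpa using D0
  have hDt' : Dpow A a (-t) * Dpow A a t = 1 := by rw [Dmul]; simpa using D0
  have hDtinv : (Dpow A a t)⁻¹ = Dpow A a (-t) := Matrix.inv_eq_right_inv hDt
  set Aa : Matrix (Fin n) (Fin n) ℝ := A + a • 1 with hAa
  set S : Matrix (Fin n) (Fin n) ℝ :=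
    m1 • Dpow A a e1 + m2 • (Dpow A a m * Aa * Dpow A a m) + m3 • 1 with hS
  have hAasymm : Aaᴴ = Aa := by
    have : Aᵀ = A := hsymm
    simp [hAa, Matrix.conjTranspose_add, Matrix.conjTranspose_smul,
      Matrix.conjTranspose_eq_transpose_of_trivial, this]
  have hDsymm : ∀ e : ℝ, (Dpow A a e)ᴴ = Dpow A a e := by
    intro e
    simp [Dpow, Matrix.diagonal_conjTranspose]
  have hSherm : S.IsHermitian := by
    unfold Matrix.IsHermitian
    simp only [hS, Matrix.conjTranspose_add, Matrix.conjTranspose_smul,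
      Matrix.conjTranspose_mul, Matrix.conjTranspose_one, hDsymm, hAasymm,
      star_trivial]
    rw [← mul_assoc]
  obtain ⟨P0, Λ0, hP0, hΛ0, hSeq⟩ := symm_diag S hSherm
  have key : pgso A m1 m2 m3 e1 e2 e3 a = Dpow A a t * S * Dpow A a (-t) := by
    rw [hS]
    rw [Matrix.mul_add, Matrix.mul_add, Matrix.add_mul, Matrix.add_mul]
    rw [pgso]
    congr 1
    · congr 1
      · rw [Matrix.mul_smul, Matrix.smul_mul, Dmul, Dmul]
        congr 2; ring
      · rw [Matrix.mul_smul, Matrix.smul_mul]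
        congr 1
        have h2 : Dpow A a t * (Dpow A a m * Aa * Dpow A a m) * Dpow A a (-t)
            = (Dpow A a t * Dpow A a m) * Aa * (Dpow A a m * Dpow A a (-t)) := by
          noncomm_ring
        rw [h2, Dmul, Dmul]
        have : t + m = e2 := by rw [ht, hm]; ring
        rw [this]
        have : m + -t = e3 := by rw [ht, hm]; ring
        rw [this, hAa]
    · rw [Matrix.mul_smul, Matrix.smul_mul, mul_one, hDt]
  refine ⟨Dpow A a t * P0, Λ0, ?_, hΛ0, ?_⟩
  · exact IsUnit.mul ⟨⟨_, _, hDt, hDt'⟩, rfl⟩ hP0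
  · rw [Matrix.mul_inv_rev, hDtinv, key, hSeq]
    noncomm_ring
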